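/- arXiv:1607.05815 — 2 statements merged into one kernel-verified Lean document; each statement's English description precedes it below -/
import Mathlib

section
/- Let T be a pure contraction on a complex Hilbert space H and let Π : H → ℓ²(ℕ, H) be the canonical isometry (Π h)(n) = D_T T*ⁿ h, with range Q. Suppose X and Y are commuting contractions on ℓ²(ℕ, H) such that Q is invariant under X* and under Y*, and Π* (X Y) Π = Π* S Π, where S is the unilateral shift. Then T1 := Π* X Π and T2 := Π* Y Π are commuting contractions on H and T = T1 T2. -/
open ContinuousLinearMap
open scoped ENNReal

set_option linter.unusedSectionVars false

noncomputable section

section ShiftOperator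

variable {E : Type*} [NormedAddCommGroup E] [InnerProductSpace ℂ E]

/-- The right-shifted sequence: `(shiftFun f) 0 = 0`, `(shiftFun f) (n+1) = f n`. -/
def shiftFun (f : ℕ → E) : ℕ → E
  | 0 => 0
  | (n + 1) => f n

lemma summable_of_lp (f : lp (fun _ : ℕ => E) 2) :
    Summable fun n => ‖(f : ∀ _ : ℕ, E) n‖ ^ (2 : ℝ) := by
  have h := lp.memℓp f
  have h2 : (0 : ℝ) < (2 : ℝ≥0∞).toReal := by norm_num
  simpa using (memℓp_gen_iff h2).mp h

lemma summable_shiftFun (f : lp (fun _ : ℕ => E) 2) :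
    Summable fun n => ‖shiftFun (f : ∀ _ : ℕ, E) n‖ ^ (2 : ℝ) := by
  have h1 : Summable fun n => ‖shiftFun (f : ∀ _ : ℕ, E) (n + 1)‖ ^ (2 : ℝ) := by
    simpa [shiftFun] using summable_of_lp f
  exact (summable_nat_add_iff
    (f := fun n => ‖shiftFun ((f : ∀ _ : ℕ, E)) n‖ ^ (2 : ℝ)) 1).mp h1

lemma memℓp_shiftFun (f : lp (fun _ : ℕ => E) 2) : Memℓp (shiftFun (f : ∀ _ : ℕ, E)) 2 := by
  apply memℓp_gen
  simpa using summable_shiftFun f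

lemma norm_shift_eq (f : lp (fun _ : ℕ => E) 2)
    (g : lp (fun _ : ℕ => E) 2) (hg : (g : ∀ _ : ℕ, E) = shiftFun (f : ∀ _ : ℕ, E)) :
    ‖g‖ = ‖f‖ := by
  have h2 : (0 : ℝ) < (2 : ℝ≥0∞).toReal := by norm_num
  rw [lp.norm_eq_tsum_rpow h2 f, lp.norm_eq_tsum_rpow h2 g]
  congr 1
  have htsum : (∑' n, ‖shiftFun (f : ∀ _ : ℕ, E) n‖ ^ (2 : ℝ)) =
      ∑' n, ‖(f : ∀ _ : ℕ, E) n‖ ^ (2 : ℝ) := by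
    rw [(summable_shiftFun f).tsum_eq_zero_add]
    simp [shiftFun]
  simp only [hg]
  simpa using htsum

/-- The unilateral shift `S` on `ℓ²(ℕ, E)`: `(S f)(0) = 0` and `(S f)(n) = f (n-1)` for
`n ≥ 1`. -/
def shiftOp (E : Type*) [NormedAddCommGroup E] [InnerProductSpace ℂ E] :
    lp (fun _ : ℕ => E) 2 →L[ℂ] lp (fun _ : ℕ => E) 2 :=
  LinearMap.mkContinuous
    { toFun := fun f => ⟨shiftFun (f : ∀ _ : ℕ, E), memℓp_shiftFun f⟩
      map_add' := by
        intro f g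
        apply lp.ext
        funext n
        cases n <;> simp [shiftFun, lp.coeFn_add, Pi.add_apply] <;> erw [Pi.add_apply] <;> simp [shiftFun]
      map_smul' := by
        intro c f
        apply lp.ext
        funext n
        cases n <;> simp [shiftFun, lp.coeFn_smul, Pi.smul_apply] }
    1
    (by
      intro f
      rw [one_mul]
      exact le_of_eq (norm_shift_eq f _ rfl))

@[simp] lemma shiftOp_apply_zero (f : lp (fun _ : ℕ => E) 2) :
    (shiftOp E f : ∀ _ : ℕ, E) 0 = 0 := rfl

@[simp] lemma shiftOp_apply_succ (f : lp (fun _ : ℕ => E) 2) (n : ℕ) :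
    (shiftOp E f : ∀ _ : ℕ, E) (n + 1) = (f : ∀ _ : ℕ, E) n := rfl

end ShiftOperator

section Defect

variable {H : Type*} [NormedAddCommGroup H] [InnerProductSpace ℂ H] [CompleteSpace H]

/-- The defect operator `D_T = (I - T T*)^{1/2}` of a contraction `T`. -/
def defect (T : H →L[ℂ] H) : H →L[ℂ] H :=
  CFC.sqrt (1 - T * adjoint T)

end Defect

section Helpers

set_option maxHeartbeats 1000000 in
set_option synthInstance.maxHeartbeats 1000000 in
lemma one_sub_mul_adjoint_nonneg {H : Type*} [NormedAddCommGroup H] [InnerProductSpace ℂ H]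
    [CompleteSpace H] (T : H →L[ℂ] H) (hT : ‖T‖ ≤ 1) :
    (0 : H →L[ℂ] H) ≤ 1 - T * adjoint T := by
  have h1 : (0:H →L[ℂ] H) ≤ star (adjoint T) * (adjoint T) := star_mul_self_nonneg _
  have h2 : star (adjoint T) * (adjoint T) ≤ 1 := by
    rw [← CStarAlgebra.norm_le_one_iff_of_nonneg _ h1, CStarRing.norm_star_mul_self]
    rw [LinearIsometryEquiv.norm_map adjoint T]
    nlinarith [norm_nonneg T]
  have := sub_nonneg.mpr h2
  simpa [star_eq_adjoint, adjoint_adjoint] using this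

set_option maxHeartbeats 1000000 in
set_option synthInstance.maxHeartbeats 1000000 in
lemma defect_selfAdjoint {H : Type*} [NormedAddCommGroup H] [InnerProductSpace ℂ H]
    [CompleteSpace H] (T : H →L[ℂ] H) : IsSelfAdjoint (defect T) :=
  (CFC.sqrt_nonneg (a := 1 - T * adjoint T)).isSelfAdjoint

set_option maxHeartbeats 1000000 in
set_option synthInstance.maxHeartbeats 1000000 in
lemma defect_mul_defect {H : Type*} [NormedAddCommGroup H] [InnerProductSpace ℂ H]
    [CompleteSpace H] (T : H →L[ℂ] H) (hT : ‖T‖ ≤ 1) :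
    defect T * defect T = 1 - T * adjoint T := by
  rw [defect, ← sq, CFC.sq_sqrt (1 - T * adjoint T) (one_sub_mul_adjoint_nonneg T hT)]

set_option maxHeartbeats 1000000 in
set_option synthInstance.maxHeartbeats 1000000 in
lemma inner_defect {H : Type*} [NormedAddCommGroup H] [InnerProductSpace ℂ H]
    [CompleteSpace H] (T : H →L[ℂ] H) (hT : ‖T‖ ≤ 1) (x : H) :
    (inner ℂ (defect T x) (defect T x) : ℂ)
      = inner ℂ x x - inner ℂ (adjoint T x) (adjoint T x) := by
  have h1 : (inner ℂ (defect T x) (defect T x) : ℂ)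
      = inner ℂ ((defect T * defect T) x) x := by
    rw [ContinuousLinearMap.mul_apply]
    rw [← adjoint_inner_left (defect T) x (defect T x)]
    rw [(defect_selfAdjoint T).adjoint_eq]
  rw [h1, defect_mul_defect T hT]
  have : ((1 - T * adjoint T : H →L[ℂ] H)) x = x - T (adjoint T x) := by
    simp [sub_apply, ContinuousLinearMap.mul_apply]
  rw [this, inner_sub_left]
  congr 1
  have := adjoint_inner_left (adjoint T) x (adjoint T x)
  rw [adjoint_adjoint] at this
  rw [this]

set_option maxHeartbeats 1000000 in
set_option synthInstance.maxHeartbeats 1000000 in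
lemma norm_sq_defect {H : Type*} [NormedAddCommGroup H] [InnerProductSpace ℂ H]
    [CompleteSpace H] (T : H →L[ℂ] H) (hT : ‖T‖ ≤ 1) (x : H) :
    ‖defect T x‖ ^ 2 = ‖x‖ ^ 2 - ‖adjoint T x‖ ^ 2 := by
  have h := inner_defect T hT x
  rw [inner_self_eq_norm_sq_to_K, inner_self_eq_norm_sq_to_K, inner_self_eq_norm_sq_to_K] at h
  have : ((‖defect T x‖ ^ 2 : ℝ) : ℂ) = ((‖x‖ ^ 2 - ‖adjoint T x‖ ^ 2 : ℝ) : ℂ) := by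
    push_cast
    exact h
  exact_mod_cast this

set_option maxHeartbeats 1000000 in
set_option synthInstance.maxHeartbeats 1000000 in
lemma gamma_norm {H : Type*} [NormedAddCommGroup H] [InnerProductSpace ℂ H]
    [CompleteSpace H] (T : H →L[ℂ] H) (hT : ‖T‖ ≤ 1)
    (hpure : ∀ h : H,
      Filter.Tendsto (fun n : ℕ => ((adjoint T) ^ n) h) Filter.atTop (nhds 0))
    (Γ : H →L[ℂ] lp (fun _ : ℕ => H) 2)
    (hΓ : ∀ (h : H) (n : ℕ), (Γ h : ∀ _ : ℕ, H) n = defect T (((adjoint T) ^ n) h))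
    (h : H) : ‖Γ h‖ = ‖h‖ := by
  have hTe : ‖adjoint T‖ ≤ 1 := by
    rw [LinearIsometryEquiv.norm_map adjoint T]; exact hT
  set g : ℕ → ℝ := fun n => ‖((adjoint T) ^ n) h‖ ^ 2 with hg
  have hterm : ∀ n, ‖(Γ h : ∀ _ : ℕ, H) n‖ ^ (2:ℝ) = g n - g (n+1) := by
    intro n
    rw [hΓ h n]
    have h2 : ‖defect T (((adjoint T) ^ n) h)‖ ^ (2:ℝ)
        = ‖defect T (((adjoint T) ^ n) h)‖ ^ (2:ℕ) := by
      norm_cast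
    rw [h2, norm_sq_defect T hT]
    have h3 : ((adjoint T) ^ (n+1)) h = adjoint T (((adjoint T) ^ n) h) := by
      rw [pow_succ']; rfl
    simp [hg, h3]
    congr 1
    exact (Function.iterate_succ_apply' _ n h).symm.trans (Function.iterate_succ_apply _ n h)
  have hnonneg : ∀ n, 0 ≤ g n - g (n+1) := by
    intro n
    have h3 : ((adjoint T) ^ (n+1)) h = adjoint T (((adjoint T) ^ n) h) := by
      rw [pow_succ']; rfl
    have h4 : ‖((adjoint T) ^ (n+1)) h‖ ≤ ‖((adjoint T) ^ n) h‖ := by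
      rw [h3]
      calc ‖adjoint T (((adjoint T) ^ n) h)‖ ≤ ‖adjoint T‖ * ‖((adjoint T) ^ n) h‖ :=
            le_opNorm _ _
        _ ≤ 1 * ‖((adjoint T) ^ n) h‖ := by
            apply mul_le_mul_of_nonneg_right hTe (norm_nonneg _)
        _ = ‖((adjoint T) ^ n) h‖ := one_mul _
    simp only [hg, sub_nonneg]
    exact pow_le_pow_left₀ (norm_nonneg _) h4 2
  have hsum : HasSum (fun n => g n - g (n+1)) (‖h‖ ^ 2) := by
    rw [hasSum_iff_tendsto_nat_of_nonneg hnonneg]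
    have hps : ∀ n, ∑ i ∈ Finset.range n, (g i - g (i+1)) = g 0 - g n := by
      intro n; exact Finset.sum_range_sub' g n
    simp only [hps]
    have hg0 : g 0 = ‖h‖ ^ 2 := by simp [hg]
    have hgn : Filter.Tendsto g Filter.atTop (nhds 0) := by
      have := (hpure h).norm
      simp only [norm_zero] at this
      have h2 := this.pow 2
      simpa [hg] using h2
    have := (tendsto_const_nhds (x := g 0)).sub hgn
    simpa [hg0] using this
  have hn2 : ‖Γ h‖ ^ (2:ℝ) = ‖h‖ ^ 2 := by
    have hrp : ‖Γ h‖ ^ ((2:ℝ≥0∞).toReal) = ∑' n, ‖(Γ h : ∀ _ : ℕ, H) n‖ ^ ((2:ℝ≥0∞).toReal) :=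
      lp.norm_rpow_eq_tsum (by norm_num) (Γ h)
    simp only [ENNReal.toReal_ofNat] at hrp
    rw [hrp]
    simp only [hterm]
    exact hsum.tsum_eq
  have hn3 : ‖Γ h‖ ^ 2 = ‖h‖ ^ 2 := by
    rw [← hn2]; norm_cast
  have := congrArg Real.sqrt hn3
  rwa [Real.sqrt_sq (norm_nonneg _), Real.sqrt_sq (norm_nonneg _)] at this

lemma gamma_inner {H : Type*} [NormedAddCommGroup H] [InnerProductSpace ℂ H]
    (Γ : H →L[ℂ] lp (fun _ : ℕ => H) 2)
    (hnorm : ∀ h : H, ‖Γ h‖ = ‖h‖) (h k : H) :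
    (inner ℂ (Γ h) (Γ k) : ℂ) = inner ℂ h k := by
  let ΓI : H →ₗᵢ[ℂ] lp (fun _ : ℕ => H) 2 := ⟨Γ.toLinearMap, hnorm⟩
  exact ΓI.inner_map_map h k

lemma gamma_adj_gamma {H : Type*} [NormedAddCommGroup H] [InnerProductSpace ℂ H]
    [CompleteSpace H] (Γ : H →L[ℂ] lp (fun _ : ℕ => H) 2)
    (hnorm : ∀ h : H, ‖Γ h‖ = ‖h‖) (h : H) :
    adjoint Γ (Γ h) = h := by
  apply ext_inner_right ℂ
  intro v
  rw [adjoint_inner_left]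
  exact gamma_inner Γ hnorm h v

lemma gamma_shift {H : Type*} [NormedAddCommGroup H] [InnerProductSpace ℂ H]
    [CompleteSpace H] (T : H →L[ℂ] H)
    (Γ : H →L[ℂ] lp (fun _ : ℕ => H) 2)
    (hnorm : ∀ h : H, ‖Γ h‖ = ‖h‖)
    (hΓshift : ∀ (k : H) (n : ℕ),
      (Γ k : ∀ _ : ℕ, H) (n + 1) = (Γ (adjoint T k) : ∀ _ : ℕ, H) n) :
    adjoint Γ ∘L (shiftOp H ∘L Γ) = T := by
  ext h
  apply ext_inner_right ℂ
  intro k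
  simp only [comp_apply]
  rw [adjoint_inner_left]
  rw [lp.inner_eq_tsum]
  have hsummable : Summable (fun n => (inner ℂ ((shiftOp H (Γ h) : ∀ _ : ℕ, H) n)
      ((Γ k : ∀ _ : ℕ, H) n) : ℂ)) := lp.summable_inner _ _
  rw [hsummable.tsum_eq_zero_add]
  have h0 : (inner ℂ ((shiftOp H (Γ h) : ∀ _ : ℕ, H) 0) ((Γ k : ∀ _ : ℕ, H) 0) : ℂ) = 0 := by
    rw [shiftOp_apply_zero]; simp
  rw [h0, zero_add]
  have hterm : ∀ n, (inner ℂ ((shiftOp H (Γ h) : ∀ _ : ℕ, H) (n+1))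
      ((Γ k : ∀ _ : ℕ, H) (n + 1)) : ℂ)
      = inner ℂ ((Γ h : ∀ _ : ℕ, H) n) ((Γ (adjoint T k) : ∀ _ : ℕ, H) n) := by
    intro n
    rw [shiftOp_apply_succ, hΓshift k n]
  simp only [hterm]
  rw [← lp.inner_eq_tsum]
  rw [gamma_inner Γ hnorm]
  rw [adjoint_inner_right]

end Helpers


set_option maxHeartbeats 2000000
set_option synthInstance.maxHeartbeats 1000000

/-- Let `T` be a pure contraction, `Γ : H → ℓ²(ℕ, H)` the canonical isometry
`(Γ h)(n) = D_T T*ⁿ h` with range `Q`. If `X, Y` are commuting contractions on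
`ℓ²(ℕ, H)` with `Q` invariant under `X*` and `Y*`, and `Γ* (X Y) Γ = Γ* S Γ`, then
`T₁ = Γ* X Γ` and `T₂ = Γ* Y Γ` are commuting contractions on `H` with `T = T₁ T₂`. -/
theorem factorization_from_compressions
    {H : Type*} [NormedAddCommGroup H] [InnerProductSpace ℂ H] [CompleteSpace H]
    (T : H →L[ℂ] H) (hT : ‖T‖ ≤ 1)
    (hpure : ∀ h : H,
      Filter.Tendsto (fun n : ℕ => ((adjoint T) ^ n) h) Filter.atTop (nhds 0))
    (Γ : H →L[ℂ] lp (fun _ : ℕ => H) 2)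
    (hΓ : ∀ (h : H) (n : ℕ), (Γ h : ∀ _ : ℕ, H) n = defect T (((adjoint T) ^ n) h))
    (X Y : lp (fun _ : ℕ => H) 2 →L[ℂ] lp (fun _ : ℕ => H) 2)
    (hX : ‖X‖ ≤ 1) (hY : ‖Y‖ ≤ 1) (hXY : Commute X Y)
    (hQX : ∀ h : H, ∃ h' : H, adjoint X (Γ h) = Γ h')
    (hQY : ∀ h : H, ∃ h' : H, adjoint Y (Γ h) = Γ h')
    (hfact : adjoint Γ ∘L ((X ∘L Y) ∘L Γ) = adjoint Γ ∘L (shiftOp H ∘L Γ)) :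
    ‖adjoint Γ ∘L (X ∘L Γ)‖ ≤ 1 ∧ ‖adjoint Γ ∘L (Y ∘L Γ)‖ ≤ 1 ∧
    Commute (adjoint Γ ∘L (X ∘L Γ)) (adjoint Γ ∘L (Y ∘L Γ)) ∧
    T = (adjoint Γ ∘L (X ∘L Γ)) * (adjoint Γ ∘L (Y ∘L Γ)) := by
  have hnorm : ∀ h : H, ‖Γ h‖ = ‖h‖ := gamma_norm T hT hpure Γ hΓ
  have hΓ1 : ‖Γ‖ ≤ 1 := Γ.opNorm_le_bound zero_le_one (fun h => by rw [hnorm h, one_mul])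
  have hΓadj1 : ‖adjoint Γ‖ ≤ 1 := by
    rw [LinearIsometryEquiv.norm_map adjoint Γ]; exact hΓ1
  have hbound : ∀ (A : lp (fun _ : ℕ => H) 2 →L[ℂ] lp (fun _ : ℕ => H) 2), ‖A‖ ≤ 1 →
      ‖adjoint Γ ∘L (A ∘L Γ)‖ ≤ 1 := by
    intro A hA
    calc ‖adjoint Γ ∘L (A ∘L Γ)‖ ≤ ‖adjoint Γ‖ * ‖A ∘L Γ‖ := opNorm_comp_le _ _
      _ ≤ ‖adjoint Γ‖ * (‖A‖ * ‖Γ‖) := by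
          exact mul_le_mul_of_nonneg_left (opNorm_comp_le _ _) (norm_nonneg _)
      _ ≤ 1 := by
          have h1 : ‖A‖ * ‖Γ‖ ≤ 1 := by nlinarith [norm_nonneg A, norm_nonneg Γ]
          nlinarith [norm_nonneg (adjoint Γ), mul_nonneg (norm_nonneg A) (norm_nonneg Γ)]
  have hΓshift : ∀ (k : H) (n : ℕ),
      (Γ k : ∀ _ : ℕ, H) (n + 1) = (Γ (adjoint T k) : ∀ _ : ℕ, H) n := by
    intro k n
    rw [hΓ, hΓ]
    congr 1
  have hST : adjoint Γ ∘L (shiftOp H ∘L Γ) = T := gamma_shift T Γ hnorm hΓshift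
  have hadj : ∀ (A : lp (fun _ : ℕ => H) 2 →L[ℂ] lp (fun _ : ℕ => H) 2) (h : H),
      adjoint (adjoint Γ ∘L (A ∘L Γ)) h = adjoint Γ (adjoint A (Γ h)) := by
    intro A h
    rw [adjoint_comp, adjoint_comp, adjoint_adjoint]
    rfl
  have hmul : ∀ (P Q : H →L[ℂ] H), adjoint (P * Q) = adjoint Q * adjoint P := by
    intro P Q
    rw [← star_eq_adjoint, star_mul, star_eq_adjoint, star_eq_adjoint]
  have key : ∀ (A B : lp (fun _ : ℕ => H) 2 →L[ℂ] lp (fun _ : ℕ => H) 2),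
      (∀ h : H, ∃ h' : H, adjoint A (Γ h) = Γ h') →
      (adjoint Γ ∘L (A ∘L Γ)) * (adjoint Γ ∘L (B ∘L Γ))
        = adjoint Γ ∘L ((A ∘L B) ∘L Γ) := by
    intro A B hQ
    have hadjeq : adjoint ((adjoint Γ ∘L (A ∘L Γ)) * (adjoint Γ ∘L (B ∘L Γ)))
        = adjoint (adjoint Γ ∘L ((A ∘L B) ∘L Γ)) := by
      ext h
      obtain ⟨h₁, hh₁⟩ := hQ h
      rw [hmul, ContinuousLinearMap.mul_apply]
      have e1 : adjoint (adjoint Γ ∘L (A ∘L Γ)) h = h₁ := by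
        rw [hadj, hh₁, gamma_adj_gamma Γ hnorm]
      rw [e1, hadj, hadj, ← hh₁, adjoint_comp]
      rfl
    have h2 := congrArg adjoint hadjeq
    rwa [adjoint_adjoint, adjoint_adjoint] at h2
  have hT1T2 : (adjoint Γ ∘L (X ∘L Γ)) * (adjoint Γ ∘L (Y ∘L Γ))
      = adjoint Γ ∘L ((X ∘L Y) ∘L Γ) := key X Y hQX
  have hT2T1 : (adjoint Γ ∘L (Y ∘L Γ)) * (adjoint Γ ∘L (X ∘L Γ))
      = adjoint Γ ∘L ((Y ∘L X) ∘L Γ) := key Y X hQY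
  have hXYc : X ∘L Y = Y ∘L X := hXY
  refine ⟨hbound X hX, hbound Y hY, ?_, ?_⟩
  · show (adjoint Γ ∘L (X ∘L Γ)) * (adjoint Γ ∘L (Y ∘L Γ))
      = (adjoint Γ ∘L (Y ∘L Γ)) * (adjoint Γ ∘L (X ∘L Γ))
    rw [hT1T2, hT2T1, hXYc]
  · rw [hT1T2, hfact, hST]
end
end

section
/- Let E be a complex Hilbert space, U a unitary operator on E and P an orthogonal projection on E. Let W_Φ and W_Ψ be the operators on ℓ²(ℕ, E) given by (W_Φ f)(0) = P U* f(0), (W_Φ f)(n) = P U* f(n) + (I−P) U* f(n−1) for n ≥ 1, and (W_Ψ f)(0) = U(I−P) f(0), (W_Ψ f)(n) = U(I−P) f(n) + U P f(n−1) for n ≥ 1. Then W_Φ W_Ψ = W_Ψ W_Φ = S, where S is the unilateral shift on ℓ²(ℕ, E). -/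
open ContinuousLinearMap
open scoped ENNReal

set_option linter.unusedSectionVars false

noncomputable section

/-- `W` is the analytic (degree-one) Toeplitz operator on `ℓ²(ℕ, E)` with symbol
`φ(z) = a + z b`, i.e. `(W f)(0) = a (f 0)` and `(W f)(n) = a (f n) + b (f (n-1))`
for `n ≥ 1`. -/
def IsToeplitz {E : Type*} [NormedAddCommGroup E] [InnerProductSpace ℂ E]
    (a b : E →L[ℂ] E)
    (W : lp (fun _ : ℕ => E) 2 →L[ℂ] lp (fun _ : ℕ => E) 2) : Prop :=
  ∀ f : lp (fun _ : ℕ => E) 2,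
    (W f : ∀ _ : ℕ, E) 0 = a ((f : ∀ _ : ℕ, E) 0) ∧
    ∀ n : ℕ, (W f : ∀ _ : ℕ, E) (n + 1) =
      a ((f : ∀ _ : ℕ, E) (n + 1)) + b ((f : ∀ _ : ℕ, E) n)

set_option maxHeartbeats 1000000 in
/-- For a unitary `U` and an orthogonal projection `P` on a complex Hilbert space `E`,
the multiplication operators `W_Φ` and `W_Ψ` on `ℓ²(ℕ, E)` with symbols
`Φ(z) = (P + z(I−P)) U*` and `Ψ(z) = U((I−P) + z P)` satisfy
`W_Φ W_Ψ = W_Ψ W_Φ = S`, where `S` is the unilateral shift. -/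
theorem bcl_multipliers_factor_shift
    {E : Type*} [NormedAddCommGroup E] [InnerProductSpace ℂ E] [CompleteSpace E]
    (U P : E →L[ℂ] E)
    (hU₁ : adjoint U * U = 1) (hU₂ : U * adjoint U = 1)
    (hP₁ : IsSelfAdjoint P) (hP₂ : P * P = P)
    (WΦ WΨ : lp (fun _ : ℕ => E) 2 →L[ℂ] lp (fun _ : ℕ => E) 2)
    (hWΦ : IsToeplitz (P ∘L adjoint U) ((1 - P) ∘L adjoint U) WΦ)
    (hWΨ : IsToeplitz (U ∘L (1 - P)) (U ∘L P) WΨ) :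
    WΦ ∘L WΨ = shiftOp E ∧ WΨ ∘L WΦ = shiftOp E := by
  have hPI : P * (1 - P) = 0 := by rw [mul_sub, mul_one, hP₂, sub_self]
  have hIP : (1 - P) * P = 0 := by rw [sub_mul, one_mul, hP₂, sub_self]
  have hII : (1 - P) * (1 - P) = 1 - P := by rw [sub_mul, one_mul, hPI, sub_zero]
  have h1 : (P ∘L adjoint U) * (U ∘L (1 - P)) = 0 := by
    show (P * adjoint U) * (U * (1 - P)) = 0
    rw [mul_assoc, ← mul_assoc (adjoint U), hU₁, one_mul, hPI]
  have h2 : (P ∘L adjoint U) * (U ∘L P) = P := by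
    show (P * adjoint U) * (U * P) = P
    rw [mul_assoc, ← mul_assoc (adjoint U), hU₁, one_mul, hP₂]
  have h3 : ((1 - P) ∘L adjoint U) * (U ∘L (1 - P)) = 1 - P := by
    show ((1 - P) * adjoint U) * (U * (1 - P)) = 1 - P
    rw [mul_assoc, ← mul_assoc (adjoint U), hU₁, one_mul, hII]
  have h4 : ((1 - P) ∘L adjoint U) * (U ∘L P) = 0 := by
    show ((1 - P) * adjoint U) * (U * P) = 0
    rw [mul_assoc, ← mul_assoc (adjoint U), hU₁, one_mul, hIP]
  have h5 : (U ∘L (1 - P)) * (P ∘L adjoint U) = 0 := by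
    show (U * (1 - P)) * (P * adjoint U) = 0
    rw [mul_assoc, ← mul_assoc (1 - P), hIP, zero_mul, mul_zero]
  have h6 : (U ∘L (1 - P)) * ((1 - P) ∘L adjoint U) + (U ∘L P) * (P ∘L adjoint U) = 1 := by
    show (U * (1 - P)) * ((1 - P) * adjoint U) + (U * P) * (P * adjoint U) = 1
    rw [mul_assoc, ← mul_assoc (1 - P), hII, mul_assoc, ← mul_assoc P P, hP₂,
      ← mul_assoc, ← mul_assoc, ← add_mul, ← mul_add]
    rw [sub_add_cancel, mul_one, hU₂]
  have h7 : (U ∘L P) * ((1 - P) ∘L adjoint U) = 0 := by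
    show (U * P) * ((1 - P) * adjoint U) = 0
    rw [mul_assoc, ← mul_assoc P, hPI, zero_mul, mul_zero]
  have k1 : ∀ x : E, (P ∘L adjoint U) ((U ∘L (1 - P)) x) = 0 := fun x => by
    simpa [mul_apply] using ContinuousLinearMap.ext_iff.mp h1 x
  have k2 : ∀ x : E, (P ∘L adjoint U) ((U ∘L P) x) = P x := fun x => by
    simpa [mul_apply] using ContinuousLinearMap.ext_iff.mp h2 x
  have k3 : ∀ x : E, ((1 - P) ∘L adjoint U) ((U ∘L (1 - P)) x) = (1 - P) x := fun x => by
    simpa [mul_apply] using ContinuousLinearMap.ext_iff.mp h3 x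
  have k4 : ∀ x : E, ((1 - P) ∘L adjoint U) ((U ∘L P) x) = 0 := fun x => by
    simpa [mul_apply] using ContinuousLinearMap.ext_iff.mp h4 x
  have k5 : ∀ x : E, (U ∘L (1 - P)) ((P ∘L adjoint U) x) = 0 := fun x => by
    simpa [mul_apply] using ContinuousLinearMap.ext_iff.mp h5 x
  have k6 : ∀ x : E, (U ∘L (1 - P)) (((1 - P) ∘L adjoint U) x)
      + (U ∘L P) ((P ∘L adjoint U) x) = x := fun x => by
    simpa [mul_apply, ContinuousLinearMap.add_apply] using ContinuousLinearMap.ext_iff.mp h6 x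
  have k7 : ∀ x : E, (U ∘L P) (((1 - P) ∘L adjoint U) x) = 0 := fun x => by
    simpa [mul_apply] using ContinuousLinearMap.ext_iff.mp h7 x
  have k0 : ∀ x : E, P x + (1 - P) x = x := fun x => by
    simp [ContinuousLinearMap.sub_apply]
  constructor
  · refine ContinuousLinearMap.ext fun f => ?_
    apply lp.ext
    funext n
    have hc : ((WΦ ∘L WΨ) f : ∀ _ : ℕ, E) = (WΦ (WΨ f) : ∀ _ : ℕ, E) := rfl
    rw [hc]
    match n with
    | 0 =>
      rw [shiftOp_apply_zero, (hWΦ (WΨ f)).1, (hWΨ f).1, k1]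
    | 1 =>
      rw [shiftOp_apply_succ, (hWΦ (WΨ f)).2 0, (hWΨ f).2 0, (hWΨ f).1,
        map_add, k1, k2, k3, zero_add, k0]
    | (m + 2) =>
      rw [shiftOp_apply_succ, (hWΦ (WΨ f)).2 (m + 1), (hWΨ f).2 (m + 1), (hWΨ f).2 m,
        map_add, map_add, k1, k2, k3, k4, zero_add, add_zero, k0]
  · refine ContinuousLinearMap.ext fun f => ?_
    apply lp.ext
    funext n
    have hc : ((WΨ ∘L WΦ) f : ∀ _ : ℕ, E) = (WΨ (WΦ f) : ∀ _ : ℕ, E) := rfl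
    rw [hc]
    match n with
    | 0 =>
      rw [shiftOp_apply_zero, (hWΨ (WΦ f)).1, (hWΦ f).1, k5]
    | 1 =>
      rw [shiftOp_apply_succ, (hWΨ (WΦ f)).2 0, (hWΦ f).2 0, (hWΦ f).1,
        map_add, k5, zero_add, k6]
    | (m + 2) =>
      rw [shiftOp_apply_succ, (hWΨ (WΦ f)).2 (m + 1), (hWΦ f).2 (m + 1), (hWΦ f).2 m,
        map_add, map_add, k5, k7, zero_add, add_zero, k6]
end
end
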